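/- Let m : ℕ and let G be a submodule of (Fin m → ℤ) such that the restriction to G of the standard dot-product bilinear form ⟨x, y⟩ = ∑ i, x i * y i is unimodular, i.e. the induced map G → Module.Dual ℤ G is bijective. Then G is a free ℤ-module of some finite rank n ≤ m admitting a basis whose Gram matrix with respect to the dot product is the n×n identity matrix, and the orthogonal complement G^⊥ = {x : Fin m → ℤ | ∀ g ∈ G, ⟨x, g⟩ = 0} admits a basis whose Gram matrix is the (m−n)×(m−n) identity matrix. -/

import Mathlib

/-- The standard dot-product bilinear form on `Fin m → ℤ`. -/
def dotB (m : ℕ) : (Fin m → ℤ) →ₗ[ℤ] (Fin m → ℤ) →ₗ[ℤ] ℤ :=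
  LinearMap.mk₂ ℤ (fun x y => ∑ i, x i * y i)
    (by intro x x' y; simp [add_mul, Finset.sum_add_distrib])
    (by intro c x y; simp [Finset.mul_sum, mul_assoc])
    (by intro x y y'; simp [mul_add, Finset.sum_add_distrib])
    (by intro c x y; simp [Finset.mul_sum, mul_left_comm])

/-- The orthogonal complement of a submodule `G` of the standard lattice `Fin m → ℤ`
with respect to the dot product. -/
def orthC {m : ℕ} (G : Submodule ℤ (Fin m → ℤ)) : Submodule ℤ (Fin m → ℤ) where
  carrier := {x | ∀ g ∈ G, ∑ i, x i * g i = 0}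
  add_mem' := by
    intro a b ha hb g hg
    have h1 := ha g hg
    have h2 := hb g hg
    simp only [Pi.add_apply, add_mul, Finset.sum_add_distrib, h1, h2, add_zero]
  zero_mem' := by intro g hg; simp
  smul_mem' := by
    intro c x hx g hg
    have h1 := hx g hg
    simp only [Pi.smul_apply, smul_eq_mul, mul_assoc, ← Finset.mul_sum, h1, mul_zero]


-- Gram of two standard basis vectors
lemma gram_single (m : ℕ) (a b : Fin m) :
    (∑ k, (Pi.single a 1 : Fin m → ℤ) k * (Pi.single b 1 : Fin m → ℤ) k)
      = if a = b then 1 else 0 := by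
  simp [Pi.single_apply, Finset.sum_ite_eq, ite_and, eq_comm]

lemma single_dot (m : ℕ) (a : Fin m) (g : Fin m → ℤ) :
    (∑ k, (Pi.single a 1 : Fin m → ℤ) k * g k) = g a := by
  simp [Pi.single_apply, Finset.sum_ite_eq]

lemma std_basis_of (m : ℕ) (H : Submodule ℤ (Fin m → ℤ)) (S : Finset (Fin m))
    (hmem : ∀ i ∈ S, (Pi.single i 1 : Fin m → ℤ) ∈ H)
    (hvanish : ∀ g ∈ H, ∀ i, i ∉ S → g i = 0) :
    ∃ b : Module.Basis (Fin S.card) ℤ H, ∀ i j,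
      (∑ k, (b i : Fin m → ℤ) k * (b j : Fin m → ℤ) k) = if i = j then 1 else 0 := by
  classical
  let e : Fin S.card ≃ S := S.equivFin.symm
  let v : Fin S.card → H := fun k => ⟨Pi.single ((e k : Fin m)) 1, hmem _ (e k).2⟩
  have hinj : Function.Injective (fun k => ((e k : Fin m))) := by
    intro a b h; exact e.injective (Subtype.ext h)
  have h1 : LinearIndependent ℤ (fun k : Fin S.card =>
      (Pi.single ((e k : Fin m)) 1 : Fin m → ℤ)) := by
    have := (Pi.basisFun ℤ (Fin m)).linearIndependent.comp _ hinj
    simpa [Function.comp_def] using this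
  have hli : LinearIndependent ℤ v := by
    apply LinearIndependent.of_comp H.subtype
    exact h1
  have hsp : ⊤ ≤ Submodule.span ℤ (Set.range v) := by
    rintro ⟨x, hx⟩ _
    have hx0 : ∀ i ∉ S, x i = 0 := fun i hi => hvanish x hx i hi
    have hxeq : (⟨x, hx⟩ : H) = ∑ k : Fin S.card, x ((e k : Fin m)) • v k := by
      apply Subtype.ext
      have hco : ((∑ k : Fin S.card, x ((e k : Fin m)) • v k : H) : Fin m → ℤ)
          = ∑ k : Fin S.card, x ((e k : Fin m)) • (Pi.single ((e k : Fin m)) 1 : Fin m → ℤ) := by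
        push_cast
        rfl
      rw [hco]
      have h2 : x = ∑ i : Fin m, x i • (Pi.single i 1 : Fin m → ℤ) := by
        ext j; simp [Pi.single_apply, Finset.sum_ite_eq]
      have h3 : ∑ i ∈ S, x i • (Pi.single i 1 : Fin m → ℤ)
          = ∑ i : Fin m, x i • (Pi.single i 1 : Fin m → ℤ) :=
        Finset.sum_subset (Finset.subset_univ S)
          (fun i _ hi => by rw [hx0 i hi, zero_smul])
      have h4 : ∑ i ∈ S, x i • (Pi.single i 1 : Fin m → ℤ)
          = ∑ k : Fin S.card, x ((e k : Fin m)) • (Pi.single ((e k : Fin m)) 1 : Fin m → ℤ) := by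
        rw [← Finset.sum_coe_sort S]
        exact (Equiv.sum_comp e (fun s : S => x (s : Fin m) • (Pi.single (s : Fin m) 1 : Fin m → ℤ))).symm
      exact (h2.trans h3.symm).trans h4
    rw [hxeq]
    exact Submodule.sum_mem _ fun k _ => Submodule.smul_mem _ _
      (Submodule.subset_span ⟨k, rfl⟩)
  refine ⟨Module.Basis.mk hli hsp, ?_⟩
  intro i j
  have hb : ∀ k, ((Module.Basis.mk hli hsp k : H) : Fin m → ℤ)
      = Pi.single ((e k : Fin m)) 1 := by
    intro k; rw [Module.Basis.mk_apply]
  rw [hb, hb, gram_single]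
  by_cases h : i = j
  · subst h; simp
  · have : ¬ ((e i : Fin m) = (e j : Fin m)) := fun hh => h (hinj hh)
    simp [h, this]

theorem stmt3 (m : ℕ) (G : Submodule ℤ (Fin m → ℤ))
    (huni : Function.Bijective
      (fun g : G => ((dotB m (g : Fin m → ℤ)).domRestrict G : Module.Dual ℤ G))) :
    ∃ n : ℕ, n ≤ m ∧
      (∃ b : Module.Basis (Fin n) ℤ G, ∀ i j,
        (∑ k, (b i : Fin m → ℤ) k * (b j : Fin m → ℤ) k) = if i = j then 1 else 0) ∧
      (∃ c : Module.Basis (Fin (m - n)) ℤ (orthC G), ∀ i j,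
        (∑ k, (c i : Fin m → ℤ) k * (c j : Fin m → ℤ) k) = if i = j then 1 else 0) := by
  classical
  -- dichotomy
  have dich : ∀ i : Fin m, (Pi.single i 1 : Fin m → ℤ) ∈ G ∨
      (Pi.single i 1 : Fin m → ℤ) ∈ orthC G := by
    intro i
    obtain ⟨ℓ, hℓ⟩ := huni.2 ((dotB m (Pi.single i 1)).domRestrict G)
    set a : Fin m → ℤ := (ℓ : Fin m → ℤ) with ha
    set w : Fin m → ℤ := Pi.single i 1 - a with hw
    have hwo : w ∈ orthC G := by
      intro g hg
      have := LinearMap.congr_fun hℓ ⟨g, hg⟩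
      simp only [dotB, LinearMap.domRestrict_apply, LinearMap.mk₂_apply] at this
      simp [hw, sub_mul, Finset.sum_sub_distrib, this]
      rw [ha, this, sub_self]
    have hna : (0:ℤ) ≤ ∑ k, a k * a k :=
      Finset.sum_nonneg fun k _ => mul_self_nonneg _
    have hnw : (0:ℤ) ≤ ∑ k, w k * w k :=
      Finset.sum_nonneg fun k _ => mul_self_nonneg _
    have haw : ∑ k, a k * w k = 0 := by
      have h1 := hwo a ℓ.2
      calc ∑ k, a k * w k = ∑ k, w k * a k := by simp [mul_comm]
        _ = 0 := h1
    have hwa : ∑ k, w k * a k = 0 := hwo a ℓ.2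
    have hsum : (∑ k, a k * a k) + (∑ k, w k * w k) = 1 := by
      have h1 : ∑ k, (a k + w k) * (a k + w k) = 1 := by
        have : ∀ k, a k + w k = (Pi.single i 1 : Fin m → ℤ) k := by
          intro k; simp [hw]
        simp only [this]
        simpa using gram_single m i i
      calc (∑ k, a k * a k) + (∑ k, w k * w k)
          = ∑ k, ((a k * a k + a k * w k) + (w k * a k + w k * w k)) := by
            simp [Finset.sum_add_distrib, haw, hwa]
        _ = ∑ k, (a k + w k) * (a k + w k) := by
            congr 1; funext k; ring
        _ = 1 := h1
    have hcase : (∑ k, a k * a k) = 0 ∨ (∑ k, w k * w k) = 0 := by omega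
    rcases hcase with h | h
    · right
      have hz : a = 0 := by
        funext k
        have := (Finset.sum_eq_zero_iff_of_nonneg
          (fun k _ => mul_self_nonneg (a k))).1 h k (Finset.mem_univ k)
        exact mul_self_eq_zero.1 this
      have hsw : (Pi.single i 1 : Fin m → ℤ) = w := by rw [hw, hz, sub_zero]
      rw [hsw]; exact hwo
    · left
      have hz : w = 0 := by
        funext k
        have := (Finset.sum_eq_zero_iff_of_nonneg
          (fun k _ => mul_self_nonneg (w k))).1 h k (Finset.mem_univ k)
        exact mul_self_eq_zero.1 this
      have hsa : (Pi.single i 1 : Fin m → ℤ) = a := by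
        have := hz
        rw [hw] at this
        linear_combination (norm := abel) this
      rw [hsa]; exact ℓ.2
  -- the finset of basis vectors in G
  let S : Finset (Fin m) := Finset.univ.filter
    (fun i => (Pi.single i 1 : Fin m → ℤ) ∈ G)
  have hSmem : ∀ i ∈ S, (Pi.single i 1 : Fin m → ℤ) ∈ G := by
    intro i hi; exact (Finset.mem_filter.1 hi).2
  have hSc : ∀ i ∈ Sᶜ, (Pi.single i 1 : Fin m → ℤ) ∈ orthC G := by
    intro i hi
    have : i ∉ S := Finset.mem_compl.1 hi
    rcases dich i with h | h
    · exact absurd (Finset.mem_filter.2 ⟨Finset.mem_univ i, h⟩) this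
    · exact h
  have hvG : ∀ g ∈ G, ∀ i, i ∉ S → g i = 0 := by
    intro g hg i hi
    have h1 := hSc i (Finset.mem_compl.2 hi) g hg
    rwa [single_dot] at h1
  have hvO : ∀ g ∈ orthC G, ∀ i, i ∉ Sᶜ → g i = 0 := by
    intro g hg i hi
    have hiS : i ∈ S := by simpa using hi
    have h1 := hg _ (hSmem i hiS)
    calc g i = ∑ k, (Pi.single i 1 : Fin m → ℤ) k * g k := (single_dot m i g).symm
      _ = ∑ k, g k * (Pi.single i 1 : Fin m → ℤ) k := by simp [mul_comm]
      _ = 0 := h1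
  obtain ⟨b, hb⟩ := std_basis_of m G S hSmem hvG
  obtain ⟨c, hc⟩ := std_basis_of m (orthC G) Sᶜ hSc hvO
  have hcard : Sᶜ.card = m - S.card := by
    simp [Finset.card_compl]
  refine ⟨S.card, ?_, ⟨b, hb⟩, ?_⟩
  · simpa using Finset.card_le_univ S
  · refine ⟨c.reindex (finCongr hcard), ?_⟩
    intro i j
    simp only [Module.Basis.reindex_apply, finCongr_symm_apply]
    rw [hc]
    by_cases h : i = j
    · subst h; simp
    · have : ¬ (Fin.cast hcard.symm i = Fin.cast hcard.symm j) := by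
        intro hh; exact h (by simpa using congrArg (Fin.cast hcard) hh)
      simp [h, this]
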